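/- (Alon–Nathanson–Ruzsa theorem) Let p be a prime, and let A and B be nonempty subsets of Z/pZ with |A| ≠ |B|. Then the restricted sumset A ∔ B = {a + b : a ∈ A, b ∈ B, a ≠ b} satisfies |A ∔ B| ≥ min(p, |A| + |B| − 2). -/

import Mathlib

open Polynomial Finset

variable {K : Type*} [CommRing K]

/-- total degree bound for an element of K[Y][X] -/
def tdLE (f : Polynomial (Polynomial K)) (d : ℕ) : Prop :=
  ∀ i j : ℕ, d < i + j → (f.coeff i).coeff j = 0

/-- pure Y-degree bound -/
def ydLE (f : Polynomial (Polynomial K)) (d : ℕ) : Prop :=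
  ∀ i j : ℕ, d < j → (f.coeff i).coeff j = 0

lemma tdLE_zero (d : ℕ) : tdLE (0 : Polynomial (Polynomial K)) d := by
  intro i j _; simp

lemma tdLE_mono {f : Polynomial (Polynomial K)} {d e : ℕ} (h : tdLE f d) (hde : d ≤ e) :
    tdLE f e := fun i j hj => h i j (lt_of_le_of_lt hde hj)

lemma tdLE_add {f g : Polynomial (Polynomial K)} {d : ℕ} (hf : tdLE f d) (hg : tdLE g d) :
    tdLE (f + g) d := by
  intro i j hj; simp [hf i j hj, hg i j hj]

lemma tdLE_neg {f : Polynomial (Polynomial K)} {d : ℕ} (hf : tdLE f d) : tdLE (-f) d := by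
  intro i j hj; simp [hf i j hj]

lemma tdLE_sub {f g : Polynomial (Polynomial K)} {d : ℕ} (hf : tdLE f d) (hg : tdLE g d) :
    tdLE (f - g) d := by
  intro i j hj; simp [hf i j hj, hg i j hj]

lemma tdLE_mul {f g : Polynomial (Polynomial K)} {d e : ℕ} (hf : tdLE f d) (hg : tdLE g e) :
    tdLE (f * g) (d + e) := by
  intro i j hj
  rw [coeff_mul, Polynomial.finset_sum_coeff]
  apply Finset.sum_eq_zero
  intro x hx
  rw [coeff_mul]
  apply Finset.sum_eq_zero
  intro y hy
  rw [Finset.HasAntidiagonal.mem_antidiagonal] at hx hy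
  by_cases h1 : d < x.1 + y.1
  · rw [hf _ _ h1, zero_mul]
  · have h2 : e < x.2 + y.2 := by omega
    rw [hg _ _ h2, mul_zero]

lemma tdLE_X : tdLE (X : Polynomial (Polynomial K)) 1 := by
  intro i j hj
  rw [coeff_X]
  split_ifs with h
  · rw [Polynomial.coeff_one, if_neg (by omega)]
  · simp

lemma tdLE_CC (c : K) : tdLE (Polynomial.C (Polynomial.C c) : Polynomial (Polynomial K)) 0 := by
  intro i j hj
  rw [coeff_C]
  split_ifs with h
  · subst h; rw [Polynomial.coeff_C]; split_ifs with h2 <;> first | omega | rfl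
  · rfl

lemma tdLE_CY : tdLE (Polynomial.C (Polynomial.X : Polynomial K)) 1 := by
  intro i j hj
  rw [coeff_C]
  split_ifs with h
  · subst h; rw [Polynomial.coeff_X]; split_ifs with h2 <;> first | omega | rfl
  · rfl

lemma tdLE_prod {ι : Type*} (s : Finset ι) (F : ι → Polynomial (Polynomial K)) (e : ι → ℕ)
    (h : ∀ i ∈ s, tdLE (F i) (e i)) : tdLE (∏ i ∈ s, F i) (∑ i ∈ s, e i) := by
  induction s using Finset.cons_induction with
  | empty =>
    intro i j hj
    simp only [Finset.prod_empty, Finset.sum_empty] at *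
    rw [Polynomial.coeff_one]
    split_ifs with h2
    · subst h2; rw [Polynomial.coeff_one, if_neg (by omega)]
    · simp
  | cons a s ha ih =>
    rw [Finset.prod_cons, Finset.sum_cons]
    exact tdLE_mul (h a (Finset.mem_cons_self a s)) (ih fun i hi => h i (Finset.mem_cons_of_mem hi))

lemma ydLE_of_tdLE {f : Polynomial (Polynomial K)} {d : ℕ} (h : tdLE f d) : ydLE f d :=
  fun i j hj => h i j (by omega)

lemma ydLE_mul {f g : Polynomial (Polynomial K)} {d e : ℕ} (hf : ydLE f d) (hg : ydLE g e) :
    ydLE (f * g) (d + e) := by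
  intro i j hj
  rw [coeff_mul, Polynomial.finset_sum_coeff]
  apply Finset.sum_eq_zero
  intro x hx
  rw [coeff_mul]
  apply Finset.sum_eq_zero
  intro y hy
  rw [Finset.HasAntidiagonal.mem_antidiagonal] at hy
  by_cases h1 : d < y.1
  · rw [hf _ _ h1, zero_mul]
  · have h2 : e < y.2 := by omega
    rw [hg _ _ h2, mul_zero]
lemma tdLE_C_of {φ : Polynomial K} {e : ℕ} (h : ∀ j, e < j → φ.coeff j = 0) :
    tdLE (Polynomial.C φ : Polynomial (Polynomial K)) e := by
  intro i j hj
  rw [coeff_C]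
  split_ifs with h2
  · subst h2; exact h j (by omega)
  · rfl

lemma tdLE_pow {f : Polynomial (Polynomial K)} {e : ℕ} (h : tdLE f e) (k : ℕ) :
    tdLE (f ^ k) (k * e) := by
  induction k with
  | zero =>
    intro i j hj
    rw [pow_zero, Polynomial.coeff_one]
    split_ifs with h2
    · subst h2; rw [Polynomial.coeff_one, if_neg (by omega)]
    · simp
  | succ k ih =>
    rw [pow_succ]
    exact tdLE_mono (tdLE_mul ih h) (by ring_nf; omega)

lemma ydLE_X : ydLE (X : Polynomial (Polynomial K)) 0 := by
  intro i j hj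
  rw [coeff_X]
  split_ifs with h
  · rw [Polynomial.coeff_one, if_neg (by omega)]
  · simp

lemma ydLE_sub {f g : Polynomial (Polynomial K)} {d : ℕ} (hf : ydLE f d) (hg : ydLE g d) :
    ydLE (f - g) d := by
  intro i j hj; simp [hf i j hj, hg i j hj]

lemma ydLE_CC (c : K) : ydLE (Polynomial.C (Polynomial.C c) : Polynomial (Polynomial K)) 0 := by
  intro i j hj
  rw [coeff_C]
  split_ifs with h
  · rw [Polynomial.coeff_C, if_neg (by omega)]
  · rfl

lemma ydLE_one : ydLE (1 : Polynomial (Polynomial K)) 0 := by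
  intro i j hj
  rw [Polynomial.coeff_one]
  split_ifs with h2
  · rw [Polynomial.coeff_one, if_neg (by omega)]
  · simp

lemma ydLE_prod {ι : Type*} (s : Finset ι) (F : ι → Polynomial (Polynomial K))
    (h : ∀ i ∈ s, ydLE (F i) 0) : ydLE (∏ i ∈ s, F i) 0 := by
  induction s using Finset.cons_induction with
  | empty => simpa using ydLE_one
  | cons a s ha ih =>
    rw [Finset.prod_cons]
    exact ydLE_mul (h a (Finset.mem_cons_self a s)) (ih fun i hi => h i (Finset.mem_cons_of_mem hi))

variable [IsDomain K]

lemma tdLE_reduction {m : ℕ} (hm : 1 ≤ m) {G : Polynomial (Polynomial K)} (hG : G.Monic)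
    (hGdeg : G.natDegree = m) (hGtd : tdLE G m) :
    ∀ (k : ℕ) (f : Polynomial (Polynomial K)), f.natDegree ≤ k → ∀ d, tdLE f d →
      ∃ q r, f = q * G + r ∧ tdLE q (d - m) ∧ tdLE r d ∧ r.natDegree < m := by
  have hGm1 : G.coeff m = 1 := hGdeg ▸ hG.coeff_natDegree
  intro k
  induction k with
  | zero =>
    intro f hf d htd
    exact ⟨0, f, by ring, tdLE_zero _, htd, by omega⟩
  | succ k ih =>
    intro f hf d htd
    by_cases hdeg : f.natDegree < m
    · exact ⟨0, f, by ring, tdLE_zero _, htd, hdeg⟩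
    push_neg at hdeg
    have hfne : f ≠ 0 := by
      intro h; rw [h] at hdeg; simp at hdeg; omega
    set deg := f.natDegree with hdegdef
    set lead := f.coeff deg with hleaddef
    have hlead : lead ≠ 0 := by
      simpa [hleaddef, hdegdef] using Polynomial.leadingCoeff_ne_zero.mpr hfne
    have hdled : deg ≤ d := by
      by_contra hc
      push_neg at hc
      apply hlead
      ext j
      simpa using htd deg j (by omega)
    set t := Polynomial.C lead * G * X ^ (deg - m) with htdef
    have htcoeff : ∀ i, deg ≤ i →
        t.coeff i = lead * G.coeff (i - (deg - m)) := by
      intro i hi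
      rw [htdef, Polynomial.coeff_mul_X_pow', if_pos (by omega), Polynomial.coeff_C_mul]
    have hfc : ∀ i, deg < i → f.coeff i = 0 := fun i hi =>
      Polynomial.coeff_eq_zero_of_natDegree_lt (by omega)
    set f' := f - t with hf'def
    have hf'deg : f'.natDegree ≤ k := by
      have h1 : ∀ i, deg ≤ i → f'.coeff i = 0 := by
        intro i hi
        rcases eq_or_lt_of_le hi with hi' | hi'
        · rw [hf'def, Polynomial.coeff_sub, htcoeff i hi, ← hi']
          have h2 : deg - (deg - m) = m := by omega
          rw [h2, hGm1, mul_one, ← hleaddef, sub_self]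
        · rw [hf'def, Polynomial.coeff_sub, hfc i hi', htcoeff i (le_of_lt hi'),
            Polynomial.coeff_eq_zero_of_natDegree_lt (by omega), mul_zero, sub_zero]
      by_contra hc
      push_neg at hc
      have h2 : f' ≠ 0 := by
        intro h0; rw [h0] at hc; simp at hc
      exact Polynomial.leadingCoeff_ne_zero.mpr h2 (h1 _ (by omega))
    have hleadtd : ∀ j, d - deg < j → lead.coeff j = 0 := by
      intro j hj
      exact htd deg j (by omega)
    have httd : tdLE t d := by
      have h1 : tdLE (Polynomial.C lead * G * X ^ (deg - m)) ((d - deg) + m + (deg - m) * 1) :=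
        tdLE_mul (tdLE_mul (tdLE_C_of hleadtd) hGtd) (tdLE_pow tdLE_X _)
      exact tdLE_mono (htdef ▸ h1) (by omega)
    obtain ⟨q', r', heq, hqtd, hrtd, hrdeg⟩ := ih f' hf'deg d (tdLE_sub htd httd)
    refine ⟨q' + Polynomial.C lead * X ^ (deg - m), r', ?_, ?_, hrtd, hrdeg⟩
    · have : f = f' + t := by rw [hf'def]; ring
      rw [this, heq, htdef]; ring
    · refine tdLE_add hqtd ?_
      have h1 : tdLE (Polynomial.C lead * X ^ (deg - m)) ((d - deg) + (deg - m) * 1) :=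
        tdLE_mul (tdLE_C_of hleadtd) (tdLE_pow tdLE_X _)
      exact tdLE_mono h1 (by omega)
lemma errProd_td (S : Finset K) :
    tdLE ((∏ c ∈ S, (X + Polynomial.C Polynomial.X - Polynomial.C (Polynomial.C c)))
      - (X + Polynomial.C Polynomial.X) ^ S.card) (S.card - 1) := by
  induction S using Finset.cons_induction with
  | empty => simpa using tdLE_zero 0
  | cons a s ha ih =>
    rw [Finset.prod_cons, Finset.card_cons]
    have key : (X + Polynomial.C Polynomial.X - Polynomial.C (Polynomial.C a)) *
        ∏ c ∈ s, (X + Polynomial.C Polynomial.X - Polynomial.C (Polynomial.C c))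
        - (X + Polynomial.C Polynomial.X) ^ (s.card + 1)
        = (X + Polynomial.C Polynomial.X) *
            ((∏ c ∈ s, (X + Polynomial.C Polynomial.X - Polynomial.C (Polynomial.C c)))
              - (X + Polynomial.C Polynomial.X) ^ s.card)
          - Polynomial.C (Polynomial.C a) *
            ∏ c ∈ s, (X + Polynomial.C Polynomial.X - Polynomial.C (Polynomial.C c)) := by
      ring
    rw [key]
    have hXY : tdLE (X + Polynomial.C Polynomial.X : Polynomial (Polynomial K)) 1 :=
      tdLE_add tdLE_X tdLE_CY
    have hprod : tdLE (∏ c ∈ s, (X + Polynomial.C Polynomial.X - Polynomial.C (Polynomial.C c)))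
        s.card := by
      have := tdLE_prod s
        (fun c => X + Polynomial.C Polynomial.X - Polynomial.C (Polynomial.C c)) (fun _ => 1)
        (fun c _ => tdLE_sub hXY (tdLE_mono (tdLE_CC c) (by omega)))
      simpa using this
    rcases Nat.eq_zero_or_pos s.card with h0 | h0
    · rw [Finset.card_eq_zero] at h0
      subst h0
      simp only [Finset.prod_empty, Finset.card_empty, pow_zero, sub_self, mul_zero, zero_sub]
      exact tdLE_mono (tdLE_neg (tdLE_mul (tdLE_CC a) hprod)) (by simp)
    · refine tdLE_sub (tdLE_mono (tdLE_mul hXY ih) (by omega))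
        (tdLE_mono (tdLE_mul (tdLE_CC a) hprod) (by omega))

lemma pow_XY_coeff (N i : ℕ) :
    ((X + Polynomial.C Polynomial.X : Polynomial (Polynomial K)) ^ N).coeff i =
      if i ≤ N then Polynomial.C ((N.choose i : K)) * Polynomial.X ^ (N - i) else 0 := by
  rw [add_pow, Polynomial.finset_sum_coeff]
  have hterm : ∀ k ∈ Finset.range (N + 1),
      ((X : Polynomial (Polynomial K)) ^ k * Polynomial.C Polynomial.X ^ (N - k) *
        (N.choose k : Polynomial (Polynomial K))).coeff i =
      if i = k then Polynomial.C ((N.choose i : K)) * Polynomial.X ^ (N - i) else 0 := by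
    intro k _
    have h1 : (X : Polynomial (Polynomial K)) ^ k * Polynomial.C Polynomial.X ^ (N - k) *
        (N.choose k : Polynomial (Polynomial K)) =
        Polynomial.C (Polynomial.X ^ (N - k) * (N.choose k : Polynomial K)) * X ^ k := by
      rw [map_mul, Polynomial.C_pow, Polynomial.C_eq_natCast]
      ring
    rw [h1, Polynomial.coeff_C_mul_X_pow]
    split_ifs with h2
    · subst h2
      rw [mul_comm, Polynomial.C_eq_natCast]
    · rfl
  rw [Finset.sum_congr rfl hterm, Finset.sum_ite_eq (Finset.range (N + 1)) i
    (fun _ => Polynomial.C ((N.choose i : K)) * Polynomial.X ^ (N - i))]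
  simp only [Finset.mem_range]
  split_ifs with h1 h2 h2 <;> first | rfl | omega

lemma anrs_poly {K : Type*} [Field K] (A B : Finset K) (m n : ℕ)
    (hm : A.card = m) (hn : B.card = n) (hm2 : 2 ≤ m) (hn2 : 2 ≤ n)
    (S : Finset K) (hS : S.card = m + n - 3)
    (hsub : ∀ a ∈ A, ∀ b ∈ B, a ≠ b → a + b ∈ S)
    (hD : (((m + n - 3).choose (m - 2) : K)) ≠ (((m + n - 3).choose (m - 1) : K))) :
    False := by
  classical
  set N := m + n - 3 with hN
  -- the polynomial G
  set G : Polynomial (Polynomial K) :=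
    ∏ a ∈ A, (X - Polynomial.C (Polynomial.C a)) with hGdef
  have hGmonic : G.Monic :=
    Polynomial.monic_prod_of_monic _ _ fun a _ => Polynomial.monic_X_sub_C _
  have hGdeg : G.natDegree = m := by
    rw [hGdef, Polynomial.natDegree_prod_of_monic _ _ fun a _ => Polynomial.monic_X_sub_C _]
    simp [hm]
  have hGtd : tdLE G m := by
    have := tdLE_prod A (fun a => X - Polynomial.C (Polynomial.C a)) (fun _ => 1)
      (fun a _ => tdLE_sub tdLE_X (tdLE_mono (tdLE_CC a) (by omega)))
    simpa [hm] using this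
  have hGy : ydLE G 0 := ydLE_prod A _ fun a _ => ydLE_sub ydLE_X (ydLE_CC a)
  -- the polynomial f
  set f : Polynomial (Polynomial K) :=
    (X - Polynomial.C Polynomial.X) *
      ∏ c ∈ S, (X + Polynomial.C Polynomial.X - Polynomial.C (Polynomial.C c)) with hfdef
  have hprodtd : tdLE (∏ c ∈ S, (X + Polynomial.C Polynomial.X - Polynomial.C (Polynomial.C c))) N := by
    have := tdLE_prod S (fun c => X + Polynomial.C Polynomial.X - Polynomial.C (Polynomial.C c))
      (fun _ => 1)
      (fun c _ => tdLE_sub (tdLE_add tdLE_X tdLE_CY) (tdLE_mono (tdLE_CC c) (by omega)))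
    simpa [hS] using this
  have hftd : tdLE f (m + n - 2) := by
    have h1 : tdLE f (1 + N) :=
      tdLE_mul (tdLE_sub tdLE_X tdLE_CY) hprodtd
    exact tdLE_mono h1 (by omega)
  -- the key coefficient of f
  have hfcoeff : (f.coeff (m - 1)).coeff (n - 1) =
      ((N.choose (m - 2) : K)) - ((N.choose (m - 1) : K)) := by
    have hsplit : f = (X - Polynomial.C Polynomial.X) *
        (X + Polynomial.C Polynomial.X) ^ N +
        (X - Polynomial.C Polynomial.X) *
          ((∏ c ∈ S, (X + Polynomial.C Polynomial.X - Polynomial.C (Polynomial.C c)))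
            - (X + Polynomial.C Polynomial.X) ^ S.card) := by
      rw [hfdef, hS]; ring
    have herr : ((((X - Polynomial.C Polynomial.X) *
        ((∏ c ∈ S, (X + Polynomial.C Polynomial.X - Polynomial.C (Polynomial.C c)))
          - (X + Polynomial.C Polynomial.X) ^ S.card))).coeff (m - 1)).coeff (n - 1) = 0 := by
      have h1 : tdLE ((X - Polynomial.C Polynomial.X) *
          ((∏ c ∈ S, (X + Polynomial.C Polynomial.X - Polynomial.C (Polynomial.C c)))
            - (X + Polynomial.C Polynomial.X) ^ S.card)) (1 + (S.card - 1)) :=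
        tdLE_mul (tdLE_sub tdLE_X tdLE_CY) (errProd_td S)
      exact h1 (m - 1) (n - 1) (by omega)
    have htop : ((((X - Polynomial.C Polynomial.X) *
        (X + Polynomial.C Polynomial.X) ^ N)).coeff (m - 1)).coeff (n - 1) =
        ((N.choose (m - 2) : K)) - ((N.choose (m - 1) : K)) := by
      have hexp : (X - Polynomial.C Polynomial.X) *
          (X + Polynomial.C Polynomial.X : Polynomial (Polynomial K)) ^ N =
          X * (X + Polynomial.C Polynomial.X) ^ N -
          Polynomial.C Polynomial.X * (X + Polynomial.C Polynomial.X) ^ N := by ring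
      rw [hexp, Polynomial.coeff_sub]
      have hm1 : m - 1 = (m - 2) + 1 := by omega
      rw [hm1, Polynomial.coeff_X_mul, Polynomial.coeff_C_mul]
      rw [pow_XY_coeff, pow_XY_coeff]
      rw [if_pos (by omega : m - 2 ≤ N), if_pos (by omega : m - 2 + 1 ≤ N)]
      have h2 : N - (m - 2) = n - 1 := by omega
      have h3 : N - (m - 2 + 1) = n - 2 := by omega
      have h4 : m - 2 + 1 = m - 1 := by omega
      rw [h2, h3, h4, Polynomial.coeff_sub]
      rw [Polynomial.coeff_C_mul_X_pow, if_pos rfl]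
      have h5 : Polynomial.X * (Polynomial.C ((N.choose (m-1) : K)) * Polynomial.X ^ (n - 2)) =
          Polynomial.C ((N.choose (m-1) : K)) * Polynomial.X ^ (n - 1) := by
        rw [(by omega : n - 1 = (n - 2) + 1), pow_succ]; ring
      rw [h5, Polynomial.coeff_C_mul_X_pow, if_pos rfl]
    rw [hsplit, Polynomial.coeff_add, Polynomial.coeff_add, herr, htop, add_zero]
  -- reduction
  obtain ⟨q, r, heq, hqtd, hrtd, hrdeg⟩ :=
    tdLE_reduction (by omega : 1 ≤ m) hGmonic hGdeg hGtd f.natDegree f le_rfl (m + n - 2) hftd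
  -- vanishing of f on A × B
  have hvanish : ∀ a ∈ A, ∀ b ∈ B,
      Polynomial.eval₂ (Polynomial.evalRingHom b) a f = 0 := by
    intro a ha b hb
    have : Polynomial.eval₂ (Polynomial.evalRingHom b) a f =
        (Polynomial.eval₂RingHom (Polynomial.evalRingHom b) a) f := rfl
    rw [this, hfdef, map_mul, map_prod]
    by_cases hab : a = b
    · have h1 : (Polynomial.eval₂RingHom (Polynomial.evalRingHom b) a)
          (X - Polynomial.C Polynomial.X) = 0 := by
        simp [hab]
      rw [h1, zero_mul]
    · have h1 : (Polynomial.eval₂RingHom (Polynomial.evalRingHom b) a)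
          (X + Polynomial.C Polynomial.X - Polynomial.C (Polynomial.C (a + b))) = 0 := by
        simp
      rw [Finset.prod_eq_zero (hsub a ha b hb hab) h1, mul_zero]
  -- r vanishes on the grid; its (m-1) coefficient vanishes on B
  have hrB : ∀ b ∈ B, r.map (Polynomial.evalRingHom b) = 0 := by
    intro b hb
    apply Polynomial.eq_zero_of_natDegree_lt_card_of_eval_eq_zero' _ A
    · intro a ha
      have hGa : (G.map (Polynomial.evalRingHom b)).eval a = 0 := by
        rw [hGdef, Polynomial.map_prod]
        rw [Polynomial.eval_prod]
        apply Finset.prod_eq_zero ha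
        simp
      have hfa : (f.map (Polynomial.evalRingHom b)).eval a = 0 := by
        rw [Polynomial.eval_map]
        exact hvanish a ha b hb
      have : f.map (Polynomial.evalRingHom b) =
          q.map (Polynomial.evalRingHom b) * G.map (Polynomial.evalRingHom b) +
          r.map (Polynomial.evalRingHom b) := by
        rw [heq]; simp [Polynomial.map_add, Polynomial.map_mul]
      rw [this] at hfa
      simpa [hGa] using hfa
    · exact lt_of_le_of_lt Polynomial.natDegree_map_le (by rw [hm]; exact hrdeg)
  set φ := r.coeff (m - 1) with hphi
  have hφB : ∀ b ∈ B, φ.eval b = 0 := by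
    intro b hb
    have h0 := hrB b hb
    have h1 : (r.map (Polynomial.evalRingHom b)).coeff (m - 1) = φ.eval b := by
      rw [Polynomial.coeff_map]; rfl
    rw [h0] at h1
    simpa using h1.symm
  have hφdeg : φ.natDegree ≤ n - 1 := by
    rw [Polynomial.natDegree_le_iff_coeff_eq_zero]
    intro j hj
    exact hrtd (m - 1) j (by omega)
  have hφ0 : φ = 0 :=
    Polynomial.eq_zero_of_natDegree_lt_card_of_eval_eq_zero' φ B hφB (by omega)
  have hqy : ydLE (q * G) (n - 2) := by
    have h1 : ydLE q (n - 2) := by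
      intro i j hj
      exact hqtd i j (by omega)
    simpa using ydLE_mul h1 hGy
  have hqG : ((q * G).coeff (m - 1)).coeff (n - 1) = 0 := hqy (m - 1) (n - 1) (by omega)
  have hfinal : (f.coeff (m - 1)).coeff (n - 1) = 0 := by
    rw [heq, Polynomial.coeff_add, Polynomial.coeff_add, hqG, ← hphi, hφ0]
    simp
  rw [hfcoeff] at hfinal
  exact hD (by linear_combination hfinal)

lemma choose_coeff_ne {p m n : ℕ} (hp : p.Prime) (hm2 : 2 ≤ m) (hn2 : 2 ≤ n)
    (hmn : m ≠ n) (hmp : m ≤ p) (hnp : n ≤ p) (hle : m + n - 2 ≤ p) :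
    (((m + n - 3).choose (m - 2) : ZMod p)) ≠ (((m + n - 3).choose (m - 1) : ZMod p)) := by
  haveI : Fact p.Prime := ⟨hp⟩
  set N := m + n - 3 with hN
  intro hC
  have h1 : N.choose (m - 1) * ((m - 1).factorial * (n - 1).factorial) =
      (n - 1) * N.factorial := by
    have e1 := Nat.choose_mul_factorial_mul_factorial (show m - 1 ≤ N by omega)
    rw [show N - (m - 1) = n - 2 by omega] at e1
    rw [show (n - 1).factorial = (n - 1) * (n - 2).factorial by
      rw [show n - 1 = (n - 2) + 1 by omega, Nat.factorial_succ]]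
    calc N.choose (m - 1) * ((m - 1).factorial * ((n - 1) * (n - 2).factorial))
        = (n - 1) * (N.choose (m - 1) * (m - 1).factorial * (n - 2).factorial) := by ring
      _ = (n - 1) * N.factorial := by rw [e1]
  have h2 : N.choose (m - 2) * ((m - 1).factorial * (n - 1).factorial) =
      (m - 1) * N.factorial := by
    have e1 := Nat.choose_mul_factorial_mul_factorial (show m - 2 ≤ N by omega)
    rw [show N - (m - 2) = n - 1 by omega] at e1
    rw [show (m - 1).factorial = (m - 1) * (m - 2).factorial by
      rw [show m - 1 = (m - 2) + 1 by omega, Nat.factorial_succ]]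
    calc N.choose (m - 2) * ((m - 1) * (m - 2).factorial * (n - 1).factorial)
        = (m - 1) * (N.choose (m - 2) * (m - 2).factorial * (n - 1).factorial) := by ring
      _ = (m - 1) * N.factorial := by rw [e1]
  have hK1 : ((N.choose (m - 1) : ZMod p)) *
      (((m - 1).factorial * (n - 1).factorial : ℕ) : ZMod p) =
      ((n - 1 : ℕ) : ZMod p) * ((N.factorial : ℕ) : ZMod p) := by
    have := congrArg (fun t : ℕ => (t : ZMod p)) h1
    push_cast at this ⊢
    convert this using 2 <;> push_cast <;> ring
  have hK2 : ((N.choose (m - 2) : ZMod p)) *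
      (((m - 1).factorial * (n - 1).factorial : ℕ) : ZMod p) =
      ((m - 1 : ℕ) : ZMod p) * ((N.factorial : ℕ) : ZMod p) := by
    have := congrArg (fun t : ℕ => (t : ZMod p)) h2
    push_cast at this ⊢
    convert this using 2 <;> push_cast <;> ring
  rw [hC] at hK2
  rw [hK1] at hK2
  have hNfac : ((N.factorial : ℕ) : ZMod p) ≠ 0 := by
    rw [Ne, ZMod.natCast_eq_zero_iff, hp.dvd_factorial]
    omega
  have hmn1 : ((n - 1 : ℕ) : ZMod p) = ((m - 1 : ℕ) : ZMod p) :=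
    mul_right_cancel₀ hNfac hK2
  rw [ZMod.natCast_eq_natCast_iff'] at hmn1
  rw [Nat.mod_eq_of_lt (by omega), Nat.mod_eq_of_lt (by omega)] at hmn1
  omega

section Main

variable {p : ℕ}

private def RS (A B : Finset (ZMod p)) : Finset (ZMod p) :=
  ((A ×ˢ B).filter fun x => x.1 ≠ x.2).image fun x => x.1 + x.2

lemma mem_RS {A B : Finset (ZMod p)} {a b : ZMod p} (ha : a ∈ A) (hb : b ∈ B) (hab : a ≠ b) :
    a + b ∈ RS A B :=
  Finset.mem_image.mpr ⟨(a, b),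
    Finset.mem_filter.mpr ⟨Finset.mem_product.mpr ⟨ha, hb⟩, hab⟩, rfl⟩

lemma RS_mono {A A' B : Finset (ZMod p)} (h : A' ⊆ A) : RS A' B ⊆ RS A B :=
  Finset.image_subset_image (Finset.filter_subset_filter _
    (Finset.product_subset_product h (Finset.Subset.refl B)))

lemma RS_card_ge (hp : p.Prime) (A B : Finset (ZMod p)) (hm2 : 2 ≤ A.card) (hn2 : 2 ≤ B.card)
    (hcard : A.card ≠ B.card) (hle : A.card + B.card - 2 ≤ p) :
    A.card + B.card - 2 ≤ (RS A B).card := by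
  haveI : Fact p.Prime := ⟨hp⟩
  haveI : NeZero p := ⟨hp.pos.ne'⟩
  by_contra hc
  push_neg at hc
  have hmp : A.card ≤ p := by
    have := Finset.card_le_univ A
    rwa [ZMod.card] at this
  have hnp : B.card ≤ p := by
    have := Finset.card_le_univ B
    rwa [ZMod.card] at this
  obtain ⟨S, hS1, _, hS3⟩ := Finset.exists_subsuperset_card_eq
    (Finset.subset_univ (RS A B)) (by omega : (RS A B).card ≤ A.card + B.card - 3)
    (by rw [Finset.card_univ, ZMod.card]; omega)
  exact anrs_poly A B A.card B.card rfl rfl hm2 hn2 S hS3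
    (fun a ha b hb hab => hS1 (mem_RS ha hb hab))
    (choose_coeff_ne hp hm2 hn2 hcard hmp hnp hle)

lemma RS_main (hp : p.Prime) (A B : Finset (ZMod p)) (hA : A.Nonempty) (hB : B.Nonempty)
    (hcard : A.card ≠ B.card) :
    min p (A.card + B.card - 2) ≤ (RS A B).card := by
  haveI : NeZero p := ⟨hp.pos.ne'⟩
  have hmp : A.card ≤ p := by
    have := Finset.card_le_univ A
    rwa [ZMod.card] at this
  have hnp : B.card ≤ p := by
    have := Finset.card_le_univ B
    rwa [ZMod.card] at this
  have hA1 : 1 ≤ A.card := hA.card_pos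
  have hB1 : 1 ≤ B.card := hB.card_pos
  by_cases hm1 : A.card = 1
  · obtain ⟨a, rfl⟩ := Finset.card_eq_one.mp hm1
    have hsub : (B.erase a).image (fun b => a + b) ⊆ RS {a} B := by
      intro x hx
      obtain ⟨b, hb, rfl⟩ := Finset.mem_image.mp hx
      exact mem_RS (Finset.mem_singleton_self a) (Finset.mem_of_mem_erase hb)
        (Ne.symm (Finset.ne_of_mem_erase hb))
    have hcard2 : ((B.erase a).image (fun b => a + b)).card = (B.erase a).card :=
      Finset.card_image_of_injective _ (add_right_injective a)
    have h3 := Finset.card_le_card hsub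
    rw [hcard2] at h3
    have h4 : B.card - 1 ≤ (B.erase a).card := Finset.pred_card_le_card_erase
    have h5 : min p (Finset.card {a} + B.card - 2) ≤ B.card - 1 := by
      rw [Finset.card_singleton]
      exact le_trans (min_le_right _ _) (by omega)
    omega
  by_cases hn1 : B.card = 1
  · obtain ⟨b, rfl⟩ := Finset.card_eq_one.mp hn1
    have hsub : (A.erase b).image (fun a => a + b) ⊆ RS A {b} := by
      intro x hx
      obtain ⟨a, ha, rfl⟩ := Finset.mem_image.mp hx
      exact mem_RS (Finset.mem_of_mem_erase ha) (Finset.mem_singleton_self b)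
        (Finset.ne_of_mem_erase ha)
    have hcard2 : ((A.erase b).image (fun a => a + b)).card = (A.erase b).card :=
      Finset.card_image_of_injective _ (add_left_injective b)
    have h3 := Finset.card_le_card hsub
    rw [hcard2] at h3
    have h4 : A.card - 1 ≤ (A.erase b).card := Finset.pred_card_le_card_erase
    have h5 : min p (A.card + Finset.card {b} - 2) ≤ A.card - 1 := by
      rw [Finset.card_singleton]
      exact le_trans (min_le_right _ _) (by omega)
    omega
  have hm2 : 2 ≤ A.card := by omega
  have hn2 : 2 ≤ B.card := by omega
  by_cases hcase : A.card + B.card - 2 ≤ p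
  · exact le_trans (min_le_right _ _) (RS_card_ge hp A B hm2 hn2 hcard hcase)
  · push_neg at hcase
    set k := p + 2 - B.card with hk
    have hkA : k ≤ A.card := by omega
    obtain ⟨A', hA'sub, hA'card⟩ := Finset.exists_subset_card_eq hkA
    have h2k : 2 ≤ k := by omega
    have hkn : k ≠ B.card := by
      intro h
      have hpeven : Even p := ⟨B.card - 1, by omega⟩
      have hp2 : p = 2 := (Nat.Prime.even_iff hp).mp hpeven
      omega
    have hle' : A'.card + B.card - 2 ≤ p := by rw [hA'card]; omega
    have h1 := RS_card_ge hp A' B (by rw [hA'card]; exact h2k) hn2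
      (by rw [hA'card]; exact hkn) hle'
    have h2 := Finset.card_le_card (RS_mono (B := B) hA'sub)
    rw [hA'card] at h1
    have h3 : min p (A.card + B.card - 2) ≤ p := min_le_left _ _
    omega

end Main

theorem stmt8 (p : ℕ) (hp : p.Prime) (A B : Finset (ZMod p))
    (hA : A.Nonempty) (hB : B.Nonempty) (hcard : A.card ≠ B.card) :
    (((((A ×ˢ B).filter fun x => x.1 ≠ x.2).image fun x => x.1 + x.2).card : ℤ)) ≥
      min (p : ℤ) ((A.card : ℤ) + (B.card : ℤ) - 2) := by
  have h1 := RS_main hp A B hA hB hcard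
  have hA1 : 1 ≤ A.card := hA.card_pos
  have hB1 : 1 ≤ B.card := hB.card_pos
  have h2 : RS A B = ((A ×ˢ B).filter fun x => x.1 ≠ x.2).image fun x => x.1 + x.2 := rfl
  rw [← h2]
  omega
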